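/- The function φ₀(x) := (1+|x|²)/(1−|x|²) satisfies Δ_H φ₀ − n φ₀ = 0 at every point of the open unit ball B₁ ⊂ ℝⁿ, and for every 0 < R < 1 it satisfies the Steklov boundary condition ∂_{ν_H} φ₀ = (2R/(1+R²)) φ₀ at every point of the sphere ∂B_R; i.e., φ₀ is an eigenfunction with boundary eigenvalue μ₀ = 2R/(1+R²). -/

import Mathlib

noncomputable section

open Real

/-- Partial derivative `∂ᵢ` of a function on `ℝⁿ`. -/
def pd {n : ℕ} (i : Fin n) (f : (Fin n → ℝ) → ℝ) (x : Fin n → ℝ) : ℝ :=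
  fderiv ℝ f x (Pi.single i 1)

/-- Euclidean Laplacian on `ℝⁿ`. -/
def lapF {n : ℕ} (f : (Fin n → ℝ) → ℝ) (x : Fin n → ℝ) : ℝ :=
  ∑ i, pd i (pd i f) x

/-- Squared Euclidean norm `|x|²`. -/
def nsq {n : ℕ} (x : Fin n → ℝ) : ℝ := ∑ i, (x i) ^ 2

/-- The Laplace–Beltrami operator of the Poincaré metric
`g_H = 4|dx|²/(1-|x|²)²` on the unit ball:
`Δ_H v = ((1-|x|²)²/4) Δv + ((n-2)(1-|x|²)/2) x·∇v`. -/
def hypLap (n : ℕ) (v : (Fin n → ℝ) → ℝ) (x : Fin n → ℝ) : ℝ :=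
  ((1 - nsq x) ^ 2 / 4) * lapF v x +
    (((n : ℝ) - 2) * (1 - nsq x) / 2) * ∑ i, x i * pd i v x

/-- The outward hyperbolic normal derivative on the sphere `∂B_R`:
`∂_{ν_H} v = ((1-|x|²)/2) (x/R)·∇v`. -/
def hypNormalDeriv (n : ℕ) (R : ℝ) (v : (Fin n → ℝ) → ℝ) (x : Fin n → ℝ) : ℝ :=
  ((1 - nsq x) / 2) * ∑ i, (x i / R) * pd i v x

lemma cont_nsq {n : ℕ} : Continuous (nsq (n := n)) := by
  unfold nsq; fun_prop

def Nmap {n : ℕ} (x : Fin n → ℝ) : (Fin n → ℝ) →L[ℝ] ℝ :=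
  ∑ i, (2 * x i) • ContinuousLinearMap.proj i

lemma hasFDerivAt_nsq {n : ℕ} (x : Fin n → ℝ) : HasFDerivAt nsq (Nmap x) x := by
  have h : ∀ i ∈ Finset.univ, HasFDerivAt (fun y : Fin n → ℝ => (y i) ^ 2)
      ((2 * x i) • (ContinuousLinearMap.proj i : (Fin n → ℝ) →L[ℝ] ℝ)) x := by
    intro i _
    have hp := (ContinuousLinearMap.proj i : (Fin n → ℝ) →L[ℝ] ℝ).hasFDerivAt (x := x)
    have := hp.mul hp
    rw [two_mul, add_smul]
    simp only [pow_two]; exact this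
  exact HasFDerivAt.fun_sum h

lemma Nmap_apply {n : ℕ} (x : Fin n → ℝ) (j : Fin n) :
    Nmap x (Pi.single j 1) = 2 * x j := by
  simp [Nmap, ContinuousLinearMap.sum_apply, Pi.single_apply, mul_ite, Finset.sum_ite_eq']

lemma hasFDerivAt_phi {n : ℕ} (x : Fin n → ℝ) (hx : nsq x ≠ 1) :
    HasFDerivAt (fun y : Fin n → ℝ => (1 + nsq y) / (1 - nsq y))
      ((2 / (1 - nsq x) ^ 2) • Nmap x) x := by
  have hne : (1 : ℝ) - nsq x ≠ 0 := sub_ne_zero.2 (Ne.symm hx)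
  have hc : HasDerivAt (fun s : ℝ => 1 + s) 1 (nsq x) := by
    simpa using (hasDerivAt_id (nsq x)).const_add 1
  have hd : HasDerivAt (fun s : ℝ => 1 - s) (-1) (nsq x) := by
    simpa using (hasDerivAt_id (nsq x)).const_sub 1
  have h : HasDerivAt (fun s : ℝ => (1 + s) / (1 - s)) (2 / (1 - nsq x) ^ 2) (nsq x) := by
    have := hc.div hd hne
    refine this.congr_deriv ?_
    ring
  exact h.comp_hasFDerivAt x (hasFDerivAt_nsq x)

lemma pd_phi {n : ℕ} (x : Fin n → ℝ) (hx : nsq x ≠ 1) (i : Fin n) :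
    pd i (fun y : Fin n → ℝ => (1 + nsq y) / (1 - nsq y)) x
      = 4 * x i / (1 - nsq x) ^ 2 := by
  rw [pd, (hasFDerivAt_phi x hx).fderiv]
  simp [Nmap_apply]
  ring

lemma hasFDerivAt_gi {n : ℕ} (x : Fin n → ℝ) (hx : nsq x ≠ 1) (i : Fin n) :
    HasFDerivAt (fun y : Fin n → ℝ => 4 * y i / (1 - nsq y) ^ 2)
      ((4 * x i) • ((2 / (1 - nsq x) ^ 3) • Nmap x)
        + (((1 - nsq x) ^ 2)⁻¹) • ((4 : ℝ) • (ContinuousLinearMap.proj i : (Fin n → ℝ) →L[ℝ] ℝ))) x := by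
  have hne : (1 : ℝ) - nsq x ≠ 0 := sub_ne_zero.2 (Ne.symm hx)
  have hk : HasDerivAt (fun s : ℝ => ((1 - s) ^ 2)⁻¹) (2 / (1 - nsq x) ^ 3) (nsq x) := by
    have hd : HasDerivAt (fun s : ℝ => 1 - s) (-1) (nsq x) := by
      simpa using (hasDerivAt_id (nsq x)).const_sub 1
    have hp := hd.pow 2
    have := hp.inv (pow_ne_zero 2 hne)
    refine this.congr_deriv ?_
    simp only [Pi.pow_apply]
    field_simp
    ring
  have hb : HasFDerivAt (fun y : Fin n → ℝ => ((1 - nsq y) ^ 2)⁻¹)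
      ((2 / (1 - nsq x) ^ 3) • Nmap x) x := by
    exact hk.comp_hasFDerivAt x (hasFDerivAt_nsq x)
  have ha : HasFDerivAt (fun y : Fin n → ℝ => 4 * y i)
      ((4 : ℝ) • (ContinuousLinearMap.proj i : (Fin n → ℝ) →L[ℝ] ℝ)) x :=
    (ContinuousLinearMap.proj i : (Fin n → ℝ) →L[ℝ] ℝ).hasFDerivAt.const_mul 4
  have := ha.mul hb
  rw [show (fun y : Fin n → ℝ => 4 * y i / (1 - nsq y) ^ 2) = (fun y => 4 * y i) * (fun y => ((1 - nsq y) ^ 2)⁻¹) from funext fun y => div_eq_mul_inv _ _]; exact this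

lemma pd_pd_phi {n : ℕ} (x : Fin n → ℝ) (hx : nsq x < 1) (i : Fin n) :
    pd i (pd i (fun y : Fin n → ℝ => (1 + nsq y) / (1 - nsq y))) x
      = 16 * (x i) ^ 2 / (1 - nsq x) ^ 3 + 4 / (1 - nsq x) ^ 2 := by
  have hne : (1 : ℝ) - nsq x ≠ 0 := sub_ne_zero.2 hx.ne'
  have hmem : {y : Fin n → ℝ | nsq y < 1} ∈ nhds x :=
    (isOpen_lt cont_nsq continuous_const).mem_nhds hx
  have hev : pd i (fun y : Fin n → ℝ => (1 + nsq y) / (1 - nsq y))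
      =ᶠ[nhds x] fun y => 4 * y i / (1 - nsq y) ^ 2 := by
    filter_upwards [hmem] with y hy
    exact pd_phi y hy.ne i
  rw [pd, hev.fderiv_eq, (hasFDerivAt_gi x hx.ne i).fderiv]
  simp [Nmap_apply]
  field_simp
  ring

/-- `φ₀(x) = (1+|x|²)/(1-|x|²)` satisfies `Δ_H φ₀ - n φ₀ = 0` in
the unit ball and the Steklov condition `∂_{ν_H} φ₀ = (2R/(1+R²)) φ₀` on every
sphere `∂B_R`, `0 < R < 1`. -/
theorem stmt_10 (n : ℕ) (hn : 2 ≤ n)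
    (φ₀ : (Fin n → ℝ) → ℝ) (hφ₀ : φ₀ = fun x => (1 + nsq x) / (1 - nsq x)) :
    (∀ x : Fin n → ℝ, nsq x < 1 → hypLap n φ₀ x - (n : ℝ) * φ₀ x = 0) ∧
    (∀ R : ℝ, 0 < R → R < 1 → ∀ x : Fin n → ℝ, nsq x = R ^ 2 →
      hypNormalDeriv n R φ₀ x = (2 * R / (1 + R ^ 2)) * φ₀ x) := by
  subst hφ₀
  constructor
  · intro x hx
    have hne : (1 : ℝ) - nsq x ≠ 0 := sub_ne_zero.2 hx.ne'
    have hlap : lapF (fun y : Fin n → ℝ => (1 + nsq y) / (1 - nsq y)) x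
        = 16 * nsq x / (1 - nsq x) ^ 3 + 4 * n / (1 - nsq x) ^ 2 := by
      unfold lapF
      rw [Finset.sum_congr rfl fun i _ => pd_pd_phi x hx i, Finset.sum_add_distrib,
        ← Finset.sum_div, ← Finset.sum_div, Finset.sum_const, Finset.card_univ,
        Fintype.card_fin]
      have hsum : ∑ i, 16 * (x i) ^ 2 = 16 * nsq x := by rw [nsq, Finset.mul_sum]
      rw [hsum]
      ring
    have hgrad : ∀ i, x i * pd i (fun y : Fin n → ℝ => (1 + nsq y) / (1 - nsq y)) x
        = 4 / (1 - nsq x) ^ 2 * (x i) ^ 2 := by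
      intro i; rw [pd_phi x hx.ne i]; ring
    unfold hypLap
    have hsum : ∑ i, (x i) ^ 2 = nsq x := rfl
    rw [hlap, Finset.sum_congr rfl fun i _ => hgrad i, ← Finset.mul_sum, hsum]
    field_simp
    ring
  · intro R hR hR1 x hxR
    have hs : nsq x < 1 := by rw [hxR]; nlinarith
    have hne : (1 : ℝ) - nsq x ≠ 0 := sub_ne_zero.2 hs.ne'
    have hgrad : ∀ i, (x i / R) * pd i (fun y : Fin n → ℝ => (1 + nsq y) / (1 - nsq y)) x
        = 4 / (R * (1 - nsq x) ^ 2) * (x i) ^ 2 := by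
      intro i; rw [pd_phi x hs.ne i]; field_simp
    unfold hypNormalDeriv
    have hsum : ∑ i, (x i) ^ 2 = nsq x := rfl
    rw [Finset.sum_congr rfl fun i _ => hgrad i, ← Finset.mul_sum, hsum, hxR]
    have h1 : (1 : ℝ) - R ^ 2 ≠ 0 := by nlinarith
    have h2 : (1 : ℝ) + R ^ 2 ≠ 0 := by positivity
    field_simp
    rw [hxR]
    ring
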